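/- Let τ ∈ ℂ with Im τ > 0, v ∈ ℂ, e(z) = −exp(−2πi(z+v+τ)), and let N ∈ Mat_{n²×n²}(ℂ) be the nilpotent matrix built from the blocks A₀, …, A_{n−1} as in the definition below. Let V = {f : ℂ → ℂ holomorphic : f(z+1) = f(z), f(z+τ) = e(z)f(z)} and W = {F : ℂ → ℂ^{n²} holomorphic : F(z+1) = F(z), F(z+τ) = e(z)·exp(N)·F(z)}. Then the map δ : V ⊗ ℂ^{n²} → W defined by δ(f ⊗ u) = Σ_{m≥0} (∇^m f / m!) · N^m u (a finite sum since N is nilpotent), where ∇ = −(1/(2πi)) d/dz, is a well-defined ℂ-linear isomorphism. -/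

import Mathlib

open Complex Matrix
open scoped TensorProduct

noncomputable section

/-- π as a complex number. -/
def πc : ℂ := Real.pi

/-- The blocks of the matrix N: A₀ is the strictly lower-triangular Toeplitz matrix with
entries a_{i−j} = (−1)^{i−j}/(i−j) below the diagonal, and A_k = −a_k·Id for k ≥ 1. -/
def Ablock (n : ℕ) (k : ℕ) : Matrix (Fin n) (Fin n) ℂ :=
  if k = 0 then
    Matrix.of fun i j : Fin n =>
      if (j : ℕ) < (i : ℕ) then
        (-1 : ℂ) ^ ((i : ℕ) - (j : ℕ)) / ((((i : ℕ) - (j : ℕ) : ℕ)) : ℂ)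
      else 0
  else (-((-1 : ℂ) ^ k / (k : ℂ))) • (1 : Matrix (Fin n) (Fin n) ℂ)

/-- The n²×n² block upper-triangular block-Toeplitz matrix N whose (p,q)-block equals
A_{q−p} for q ≥ p and 0 otherwise; rows and columns are indexed by pairs
(block index, index inside the block). -/
def Nmat (n : ℕ) : Matrix (Fin n × Fin n) (Fin n × Fin n) ℂ :=
  Matrix.of fun pi qj : Fin n × Fin n =>
    if (pi.1 : ℕ) ≤ (qj.1 : ℕ) then Ablock n ((qj.1 : ℕ) - (pi.1 : ℕ)) pi.2 qj.2 else 0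

/-- The differential operator ∇ = −(1/(2πi)) d/dz. -/
def nabla (f : ℂ → ℂ) : ℂ → ℂ := fun z => -(1 / (2 * πc * I)) * deriv f z

/-- The space of holomorphic functions f with f(z+1) = f(z) and f(z+τ) = φ(z)·f(z). -/
def Vsp (τ : ℂ) (φ : ℂ → ℂ) : Submodule ℂ (ℂ → ℂ) where
  carrier := {f | Differentiable ℂ f ∧ (∀ z, f (z + 1) = f z) ∧ ∀ z, f (z + τ) = φ z * f z}
  add_mem' := by
    rintro f g ⟨hd, hp, hq⟩ ⟨gd, gp, gq⟩
    refine ⟨hd.add gd, fun z => ?_, fun z => ?_⟩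
    · show f (z + 1) + g (z + 1) = f z + g z
      rw [hp, gp]
    · show f (z + τ) + g (z + τ) = φ z * (f z + g z)
      rw [hq, gq, mul_add]
  zero_mem' := ⟨differentiable_const 0, fun z => rfl, fun z => by simp⟩
  smul_mem' := by
    rintro a f ⟨hd, hp, hq⟩
    refine ⟨hd.const_smul a, fun z => ?_, fun z => ?_⟩
    · show a • f (z + 1) = a • f z
      rw [hp]
    · show a • f (z + τ) = φ z * (a • f z)
      rw [hq, smul_eq_mul, smul_eq_mul, mul_left_comm]

/-- The space of holomorphic vector-valued functions F with F(z+1) = F(z) and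
F(z+τ) = e(z)·exp(N)·F(z). -/
def Wsp (n : ℕ) (τ : ℂ) (e : ℂ → ℂ) : Submodule ℂ (ℂ → (Fin n × Fin n → ℂ)) where
  carrier := {F | (∀ i, Differentiable ℂ fun z => F z i) ∧ (∀ z, F (z + 1) = F z) ∧
    ∀ z, F (z + τ) = e z • (NormedSpace.exp (Nmat n)).mulVec (F z)}
  add_mem' := by
    rintro F G ⟨hd, hp, hq⟩ ⟨gd, gp, gq⟩
    refine ⟨fun i => ?_, fun z => ?_, fun z => ?_⟩
    · show Differentiable ℂ fun z => F z i + G z i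
      exact (hd i).add (gd i)
    · show F (z + 1) + G (z + 1) = F z + G z
      rw [hp, gp]
    · show F (z + τ) + G (z + τ) = e z • (NormedSpace.exp (Nmat n)).mulVec (F z + G z)
      rw [hq, gq, Matrix.mulVec_add, smul_add]
  zero_mem' := by
    refine ⟨fun i => ?_, fun z => rfl, fun z => by simp⟩
    show Differentiable ℂ fun _ => (0 : ℂ)
    exact differentiable_const 0
  smul_mem' := by
    rintro a F ⟨hd, hp, hq⟩
    refine ⟨fun i => ?_, fun z => ?_, fun z => ?_⟩
    · show Differentiable ℂ fun z => a • F z i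
      exact (hd i).const_smul a
    · show a • F (z + 1) = a • F z
      rw [hp]
    · show a • F (z + τ) = e z • (NormedSpace.exp (Nmat n)).mulVec (a • F z)
      rw [hq, Matrix.mulVec_smul, smul_comm]

/-- The function δ(f ⊗ u) = Σ_m (∇^m f/m!)·N^m u. -/
def deltaFun (n : ℕ) (f : ℂ → ℂ) (u : Fin n × Fin n → ℂ) : ℂ → (Fin n × Fin n → ℂ) :=
  fun z => ∑ m ∈ Finset.range (2 * n), ((m.factorial : ℂ))⁻¹ •
    (nabla^[m] f z) • ((Nmat n) ^ m).mulVec u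


lemma tri_pow_eq_zero {ι : Type*} [Fintype ι] [DecidableEq ι]
    (M : Matrix ι ι ℂ) (ψ : ι → ℕ) (B : ℕ)
    (h : ∀ x y, M x y ≠ 0 → ψ x < ψ y) (hB : ∀ x, ψ x < B)
    {m : ℕ} (hm : B ≤ m) : M ^ m = 0 := by
  have key : ∀ k (x y : ι), (M ^ k) x y ≠ 0 → ψ x + k ≤ ψ y := by
    intro k
    induction k with
    | zero =>
      intro x y hxy
      rw [pow_zero] at hxy
      by_cases hxy' : x = y
      · subst hxy'; omega
      · exact absurd (Matrix.one_apply_ne hxy') hxy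
    | succ k ih =>
      intro x y hxy
      rw [pow_succ, Matrix.mul_apply] at hxy
      obtain ⟨j, -, hj⟩ := Finset.exists_ne_zero_of_sum_ne_zero hxy
      have h1 := ih x j (left_ne_zero_of_mul hj)
      have h2 := h j y (right_ne_zero_of_mul hj)
      omega
  ext x y
  by_contra hxy
  have h1 := key m x y hxy
  have h2 := hB y
  omega

lemma sum_square_eq_diag {M : Type*} [AddCommMonoid M] (K : ℕ) (F : ℕ → ℕ → M)
    (hF : ∀ p q, K ≤ p + q + 1 → F p q = 0) :
    ∑ p ∈ Finset.range K, ∑ q ∈ Finset.range K, F p q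
      = ∑ s ∈ Finset.range K, ∑ q ∈ Finset.range (s + 1), F (s - q) q := by
  rw [Finset.sum_comm]
  have h1 : ∀ q ∈ Finset.range K,
      ∑ p ∈ Finset.range K, F p q = ∑ p ∈ Finset.range (K - q), F p q := by
    intro q hq
    refine (Finset.sum_subset ?_ ?_).symm
    · intro p hp; simp only [Finset.mem_range] at *; omega
    · intro p hp hp2; apply hF; simp only [Finset.mem_range] at *; omega
  rw [Finset.sum_congr rfl h1, ← Finset.sum_range_diag_flip K (fun q p => F p q)]

lemma fact_coeff {s q : ℕ} (h : q ≤ s) :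
    (((s - q).factorial : ℂ))⁻¹ * ((q.factorial : ℂ))⁻¹
      = (s.choose q : ℂ) * ((s.factorial : ℂ))⁻¹ := by
  have h1 : ((s.choose q : ℂ)) * (q.factorial : ℂ) * ((s - q).factorial : ℂ)
      = (s.factorial : ℂ) := by
    exact_mod_cast congrArg (Nat.cast : ℕ → ℂ) (Nat.choose_mul_factorial_mul_factorial h)
  have n1 : ((s - q).factorial : ℂ) ≠ 0 := Nat.cast_ne_zero.2 (Nat.factorial_ne_zero _)
  have n2 : ((q.factorial : ℂ)) ≠ 0 := Nat.cast_ne_zero.2 (Nat.factorial_ne_zero _)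
  have n3 : ((s.factorial : ℂ)) ≠ 0 := Nat.cast_ne_zero.2 (Nat.factorial_ne_zero _)
  field_simp
  linear_combination -h1

lemma conv_coeff (a b : ℂ) (s : ℕ) :
    ∑ q ∈ Finset.range (s + 1),
      (a ^ (s - q) * (((s - q).factorial : ℂ))⁻¹) * (b ^ q * ((q.factorial : ℂ))⁻¹)
      = (a + b) ^ s * ((s.factorial : ℂ))⁻¹ := by
  rw [add_comm a b, add_pow, Finset.sum_mul]
  refine Finset.sum_congr rfl fun q hq => ?_
  rw [Finset.mem_range] at hq
  have h : q ≤ s := by omega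
  have := fact_coeff h
  calc a ^ (s - q) * (((s - q).factorial : ℂ))⁻¹ * (b ^ q * ((q.factorial : ℂ))⁻¹)
      = (a ^ (s - q) * b ^ q) * ((((s - q).factorial : ℂ))⁻¹ * ((q.factorial : ℂ))⁻¹) := by ring
    _ = (a ^ (s - q) * b ^ q) * ((s.choose q : ℂ) * ((s.factorial : ℂ))⁻¹) := by rw [this]
    _ = b ^ q * a ^ (s - q) * (s.choose q : ℂ) * ((s.factorial : ℂ))⁻¹ := by ring

lemma mulVec_sum' {ι κ : Type*} [Fintype ι] (M : Matrix κ ι ℂ) {α : Type*} (s : Finset α)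
    (v : α → ι → ℂ) : M.mulVec (∑ x ∈ s, v x) = ∑ x ∈ s, M.mulVec (v x) := by
  classical
  induction s using Finset.induction with
  | empty => simp [Matrix.mulVec_zero]
  | insert _ _ h ih => rw [Finset.sum_insert h, Finset.sum_insert h, Matrix.mulVec_add, ih]

lemma Nmat_pow_eq_zero {n m : ℕ} (hn : 1 ≤ n) (hm : 2 * n - 1 ≤ m) : Nmat n ^ m = 0 := by
  refine tri_pow_eq_zero (Nmat n) (fun x => (x.1 : ℕ) + (n - 1 - (x.2 : ℕ))) (2 * n - 1)
    ?_ ?_ hm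
  · rintro ⟨p, i⟩ ⟨q, j⟩ hxy
    simp only [Nmat, Matrix.of_apply] at hxy
    by_cases hpq : (p : ℕ) ≤ (q : ℕ)
    · rw [if_pos hpq] at hxy
      by_cases h0 : (q : ℕ) - (p : ℕ) = 0
      · rw [h0] at hxy
        simp only [Ablock, if_true, eq_self_iff_true, Matrix.of_apply] at hxy
        by_cases hji : (j : ℕ) < (i : ℕ)
        · have hi := i.2; have hj := j.2; have hp := p.2; have hq := q.2
          simp only []
          omega
        · rw [if_neg hji] at hxy; exact absurd rfl hxy
      · simp only [Ablock, if_neg h0, Matrix.smul_apply] at hxy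
        have hij : i = j := by
          by_contra hij
          rw [Matrix.one_apply_ne hij] at hxy
          simp at hxy
        subst hij
        have hi := i.2; have hp := p.2; have hq := q.2
        simp only []
        omega
    · rw [if_neg hpq] at hxy; exact absurd rfl hxy
  · rintro ⟨p, i⟩
    have hp := p.2; have hi := i.2
    simp only []
    omega

def Emat (n : ℕ) (c : ℂ) : Matrix (Fin n × Fin n) (Fin n × Fin n) ℂ :=
  ∑ m ∈ Finset.range (2 * n), (c ^ m * ((m.factorial : ℂ))⁻¹) • Nmat n ^ m

lemma exp_Nmat {n : ℕ} (hn : 1 ≤ n) : NormedSpace.exp (Nmat n) = Emat n 1 := by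
  simp only [NormedSpace.exp_eq_tsum ℂ]
  rw [tsum_eq_sum (s := Finset.range (2 * n))
    (f := fun m : ℕ => ((m.factorial : ℂ))⁻¹ • Nmat n ^ m)]
  · exact Finset.sum_congr rfl fun m _ => by rw [one_pow, one_mul]
  · intro b hb
    rw [Finset.mem_range] at hb
    rw [Nmat_pow_eq_zero hn (by omega), smul_zero]

lemma Emat_mul {n : ℕ} (hn : 1 ≤ n) (a b : ℂ) : Emat n a * Emat n b = Emat n (a + b) := by
  unfold Emat
  rw [Finset.sum_mul_sum]
  have : ∀ p q : ℕ,
      ((a ^ p * ((p.factorial : ℂ))⁻¹) • Nmat n ^ p) * ((b ^ q * ((q.factorial : ℂ))⁻¹) • Nmat n ^ q)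
        = ((a ^ p * ((p.factorial : ℂ))⁻¹) * (b ^ q * ((q.factorial : ℂ))⁻¹)) • Nmat n ^ (p + q) := by
    intro p q
    rw [smul_mul_smul_comm, ← pow_add]
  simp_rw [this]
  rw [sum_square_eq_diag (2 * n)
    (fun p q => ((a ^ p * ((p.factorial : ℂ))⁻¹) * (b ^ q * ((q.factorial : ℂ))⁻¹)) • Nmat n ^ (p + q))
    (fun p q hpq => by simp only [Nmat_pow_eq_zero hn (show 2 * n - 1 ≤ p + q by omega), smul_zero])]
  refine Finset.sum_congr rfl fun s hs => ?_
  have : ∀ q ∈ Finset.range (s + 1),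
      ((a ^ (s - q) * (((s - q).factorial : ℂ))⁻¹) * (b ^ q * ((q.factorial : ℂ))⁻¹)) • Nmat n ^ (s - q + q)
        = ((a ^ (s - q) * (((s - q).factorial : ℂ))⁻¹) * (b ^ q * ((q.factorial : ℂ))⁻¹)) • Nmat n ^ s := by
    intro q hq
    rw [Finset.mem_range] at hq
    rw [Nat.sub_add_cancel (by omega)]
  rw [Finset.sum_congr rfl this, ← Finset.sum_smul, conv_coeff]

lemma Emat_zero {n : ℕ} (hn : 1 ≤ n) : Emat n 0 = 1 := by
  unfold Emat
  rw [Finset.sum_eq_single_of_mem 0 (Finset.mem_range.2 (by omega))]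
  · simp
  · intro m _ hm
    rw [zero_pow hm, zero_mul, zero_smul]

lemma Nmat_comm_Emat {n : ℕ} (c : ℂ) : Emat n c * Nmat n = Nmat n * Emat n c := by
  unfold Emat
  rw [Finset.sum_mul, Finset.mul_sum]
  refine Finset.sum_congr rfl fun m _ => ?_
  rw [smul_mul_assoc, mul_smul_comm, ← pow_succ, ← pow_succ']

lemma nabla_const_mul (a : ℂ) (f : ℂ → ℂ) :
    nabla (fun z => a * f z) = fun z => a * nabla f z := by
  funext z
  unfold nabla
  rw [deriv_const_mul_field]
  ring

lemma nabla_iter_const_mul (m : ℕ) (a : ℂ) (f : ℂ → ℂ) :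
    nabla^[m] (fun z => a * f z) = fun z => a * nabla^[m] f z := by
  induction m with
  | zero => rfl
  | succ m ih =>
    simp only [Function.iterate_succ_apply']
    rw [ih, nabla_const_mul]

lemma deriv_differentiable {f : ℂ → ℂ} (hf : Differentiable ℂ f) :
    Differentiable ℂ (deriv f) := by
  have h1 : AnalyticOnNhd ℂ f Set.univ :=
    hf.differentiableOn.analyticOnNhd isOpen_univ
  rw [← differentiableOn_univ]
  exact h1.deriv.differentiableOn

lemma nabla_differentiable {f : ℂ → ℂ} (hf : Differentiable ℂ f) :
    Differentiable ℂ (nabla f) :=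
  (deriv_differentiable hf).const_mul _

lemma nabla_iter_differentiable {f : ℂ → ℂ} (hf : Differentiable ℂ f) (m : ℕ) :
    Differentiable ℂ (nabla^[m] f) := by
  induction m with
  | zero => exact hf
  | succ m ih => rw [Function.iterate_succ_apply']; exact nabla_differentiable ih

lemma nabla_sum {α : Type*} (s : Finset α) (g : α → ℂ → ℂ)
    (hg : ∀ x ∈ s, Differentiable ℂ (g x)) :
    nabla (fun z => ∑ x ∈ s, g x z) = fun z => ∑ x ∈ s, nabla (g x) z := by
  funext z
  unfold nabla
  rw [deriv_fun_sum (fun x hx => (hg x hx).differentiableAt), Finset.mul_sum]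

lemma nabla_iter_sum {α : Type*} (m : ℕ) (s : Finset α) (c : α → ℂ) (g : α → ℂ → ℂ)
    (hg : ∀ x ∈ s, Differentiable ℂ (g x)) :
    nabla^[m] (fun z => ∑ x ∈ s, c x * g x z)
      = fun z => ∑ x ∈ s, c x * nabla^[m] (g x) z := by
  induction m with
  | zero => rfl
  | succ m ih =>
    simp only [Function.iterate_succ_apply']
    rw [ih, nabla_sum s (fun x => fun z => c x * nabla^[m] (g x) z)
      (fun x hx => ((nabla_iter_differentiable (hg x hx) m).const_mul _))]
    funext z
    exact Finset.sum_congr rfl fun x hx => congrFun (nabla_const_mul _ _) z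

lemma nabla_add {f g : ℂ → ℂ} (hf : Differentiable ℂ f) (hg : Differentiable ℂ g) :
    nabla (fun z => f z + g z) = fun z => nabla f z + nabla g z := by
  funext z
  show -(1 / (2 * πc * I)) * deriv (fun z => f z + g z) z
    = -(1 / (2 * πc * I)) * deriv f z + -(1 / (2 * πc * I)) * deriv g z
  rw [deriv_fun_add hf.differentiableAt hg.differentiableAt]
  ring

lemma nabla_iter_add (m : ℕ) {f g : ℂ → ℂ} (hf : Differentiable ℂ f)
    (hg : Differentiable ℂ g) :
    nabla^[m] (fun z => f z + g z) = fun z => nabla^[m] f z + nabla^[m] g z := by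
  induction m with
  | zero => rfl
  | succ m ih =>
    simp only [Function.iterate_succ_apply']
    rw [ih, nabla_add (nabla_iter_differentiable hf m) (nabla_iter_differentiable hg m)]

lemma nabla_iter_zero_fun (m : ℕ) : nabla^[m] (fun _ => (0 : ℂ)) = fun _ => 0 := by
  induction m with
  | zero => rfl
  | succ m ih =>
    rw [Function.iterate_succ_apply', ih]
    funext z
    unfold nabla
    simp

lemma nabla_iter_periodic {f : ℂ → ℂ} (hp : ∀ z, f (z + 1) = f z) (m : ℕ) :
    ∀ z, nabla^[m] f (z + 1) = nabla^[m] f z := by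
  induction m with
  | zero => exact hp
  | succ m ih =>
    intro z
    simp only [Function.iterate_succ_apply']
    unfold nabla
    congr 1
    rw [← deriv_comp_add_const]
    congr 1
    funext w
    exact ih w

lemma nabla_iter_comp_add (f : ℂ → ℂ) (t : ℂ) (m : ℕ) :
    ∀ z, nabla^[m] f (z + t) = nabla^[m] (fun w => f (w + t)) z := by
  induction m with
  | zero => intro z; rfl
  | succ m ih =>
    intro z
    simp only [Function.iterate_succ_apply']
    unfold nabla
    congr 1
    rw [← deriv_comp_add_const]
    congr 1
    funext w
    exact ih w

lemma twopiI_ne : (2 * πc * I) ≠ 0 := by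
  refine mul_ne_zero (mul_ne_zero two_ne_zero ?_) Complex.I_ne_zero
  simp only [πc, ne_eq, Complex.ofReal_eq_zero]
  exact Real.pi_ne_zero

def eFun (v τ : ℂ) : ℂ → ℂ := fun z => -Complex.exp (-(2 * πc * I) * (z + v + τ))

lemma eFun_differentiable {v τ : ℂ} : Differentiable ℂ (eFun v τ) := by
  unfold eFun
  exact (Complex.differentiable_exp.comp
    (((differentiable_id.add_const v).add_const τ).const_mul _)).neg

lemma deriv_eFun {v τ : ℂ} (z : ℂ) :
    deriv (eFun v τ) z = -(2 * πc * I) * eFun v τ z := by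
  have h1 : HasDerivAt (fun z : ℂ => -(2 * πc * I) * (z + v + τ)) (-(2 * πc * I)) z := by
    have h0 := HasDerivAt.const_mul (-(2 * πc * I))
      (((hasDerivAt_id z).add_const v).add_const τ)
    simpa using h0
  have h3 : HasDerivAt (fun w : ℂ => -Complex.exp (-(2 * πc * I) * (w + v + τ)))
      (-(Complex.exp (-(2 * πc * I) * (z + v + τ)) * -(2 * πc * I))) z :=
    ((Complex.hasDerivAt_exp _).comp z h1).neg
  unfold eFun
  rw [h3.deriv]
  ring

lemma nabla_eFun_mul {v τ : ℂ} {g : ℂ → ℂ} (hg : Differentiable ℂ g) (z : ℂ) :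
    nabla (fun w => eFun v τ w * g w) z = eFun v τ z * (g z + nabla g z) := by
  unfold nabla
  rw [deriv_fun_mul (eFun_differentiable.differentiableAt) hg.differentiableAt, deriv_eFun]
  have key : -(1 / (2 * πc * I)) * -(2 * πc * I) = 1 := by
    field_simp
    exact div_self (right_ne_zero_of_mul (left_ne_zero_of_mul twopiI_ne))
  linear_combination (eFun v τ z * g z) * key

lemma pascal_sum (m : ℕ) (x : ℕ → ℂ) :
    ∑ k ∈ Finset.range (m + 1), (m.choose k : ℂ) * x k
      + ∑ k ∈ Finset.range (m + 1), (m.choose k : ℂ) * x (k + 1)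
      = ∑ k ∈ Finset.range (m + 2), ((m + 1).choose k : ℂ) * x k := by
  rw [Finset.sum_range_succ' (fun k => ((m + 1).choose k : ℂ) * x k) (m + 1)]
  simp only [Nat.choose_succ_succ, Nat.succ_eq_add_one, Nat.cast_add, add_mul,
    Nat.choose_zero_right, Nat.cast_one, one_mul]
  rw [Finset.sum_add_distrib]
  have h2 : ∑ k ∈ Finset.range (m + 1), (m.choose (k + 1) : ℂ) * x (k + 1)
        + (m.choose 0 : ℂ) * x 0
      = ∑ k ∈ Finset.range (m + 2), (m.choose k : ℂ) * x k :=
    (Finset.sum_range_succ' (fun k => (m.choose k : ℂ) * x k) (m + 1)).symm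
  rw [Finset.sum_range_succ (fun k => (m.choose k : ℂ) * x k) (m + 1)] at h2
  simp only [Nat.choose_succ_self, Nat.cast_zero, zero_mul, add_zero, Nat.choose_zero_right,
    Nat.cast_one, one_mul, Nat.succ_eq_add_one] at h2
  linear_combination -h2

lemma nabla_iter_eFun_mul {v τ : ℂ} {g : ℂ → ℂ} (hg : Differentiable ℂ g) (m : ℕ) :
    ∀ z, nabla^[m] (fun w => eFun v τ w * g w) z
      = eFun v τ z * ∑ k ∈ Finset.range (m + 1), (m.choose k : ℂ) * nabla^[k] g z := by
  induction m with
  | zero => intro z; simp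
  | succ m ih =>
    intro z
    rw [Function.iterate_succ_apply']
    have hfe : nabla^[m] (fun w => eFun v τ w * g w)
        = fun w => eFun v τ w
            * ∑ k ∈ Finset.range (m + 1), (m.choose k : ℂ) * nabla^[k] g w :=
      funext ih
    rw [hfe]
    have hS : Differentiable ℂ
        (fun w => ∑ k ∈ Finset.range (m + 1), (m.choose k : ℂ) * nabla^[k] g w) :=
      Differentiable.fun_sum fun k _ => (nabla_iter_differentiable hg k).const_mul _
    rw [nabla_eFun_mul hS]
    have hDS : nabla
          (fun w => ∑ k ∈ Finset.range (m + 1), (m.choose k : ℂ) * nabla^[k] g w) z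
        = ∑ k ∈ Finset.range (m + 1), (m.choose k : ℂ) * nabla^[k + 1] g z := by
      have h3 := nabla_iter_sum 1 (Finset.range (m + 1)) (fun k => (m.choose k : ℂ))
        (fun k => nabla^[k] g) (fun k _ => nabla_iter_differentiable hg k)
      simp only [Function.iterate_one] at h3
      rw [h3]
      exact Finset.sum_congr rfl fun k _ => by
        rw [← Function.iterate_succ_apply' nabla k g]
    rw [hDS, pascal_sum m (fun k => nabla^[k] g z)]

lemma sum_mulVec' {ι κ : Type*} [Fintype ι] {α : Type*} (s : Finset α)
    (M : α → Matrix κ ι ℂ) (v : ι → ℂ) :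
    (∑ x ∈ s, M x).mulVec v = ∑ x ∈ s, (M x).mulVec v := by
  classical
  induction s using Finset.induction with
  | empty => simp [Matrix.zero_mulVec]
  | insert _ _ h ih => rw [Finset.sum_insert h, Finset.sum_insert h, Matrix.add_mulVec, ih]

def TopF (n : ℕ) (c : ℂ) (H : ℂ → (Fin n × Fin n → ℂ)) : ℂ → (Fin n × Fin n → ℂ) :=
  fun z => ∑ m ∈ Finset.range (2 * n), (c ^ m * ((m.factorial : ℂ))⁻¹) •
    (Nmat n ^ m).mulVec (fun i => nabla^[m] (fun w => H w i) z)

lemma TopF_apply_eq (n : ℕ) (c : ℂ) (H : ℂ → (Fin n × Fin n → ℂ)) (i : Fin n × Fin n) :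
    (fun z => TopF n c H z i)
      = fun z => ∑ p ∈ Finset.range (2 * n) ×ˢ (Finset.univ : Finset (Fin n × Fin n)),
          ((c ^ p.1 * ((p.1.factorial : ℂ))⁻¹) * (Nmat n ^ p.1) i p.2)
            * nabla^[p.1] (fun w => H w p.2) z := by
  funext z
  rw [Finset.sum_product]
  simp only [TopF, Finset.sum_apply, Pi.smul_apply, smul_eq_mul, Matrix.mulVec,
    dotProduct, Finset.mul_sum]
  exact Finset.sum_congr rfl fun m _ => Finset.sum_congr rfl fun j _ => by ring

lemma TopF_diff (n : ℕ) (c : ℂ) (H : ℂ → (Fin n × Fin n → ℂ))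
    (hH : ∀ i, Differentiable ℂ (fun z => H z i)) (i : Fin n × Fin n) :
    Differentiable ℂ (fun z => TopF n c H z i) := by
  rw [TopF_apply_eq]
  exact Differentiable.fun_sum fun p _ => ((nabla_iter_differentiable (hH p.2) p.1).const_mul _)

lemma nabla_iter_TopF (n : ℕ) (c : ℂ) (H : ℂ → (Fin n × Fin n → ℂ))
    (hH : ∀ i, Differentiable ℂ (fun z => H z i)) (M : ℕ) (i : Fin n × Fin n) (z : ℂ) :
    nabla^[M] (fun w => TopF n c H w i) z
      = (∑ k ∈ Finset.range (2 * n), (c ^ k * ((k.factorial : ℂ))⁻¹) •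
          (Nmat n ^ k).mulVec (fun j => nabla^[M + k] (fun w => H w j) z)) i := by
  rw [TopF_apply_eq]
  rw [nabla_iter_sum M (Finset.range (2 * n) ×ˢ (Finset.univ : Finset (Fin n × Fin n)))
    (fun p => (c ^ p.1 * ((p.1.factorial : ℂ))⁻¹) * (Nmat n ^ p.1) i p.2)
    (fun p => nabla^[p.1] (fun w => H w p.2))
    (fun p _ => nabla_iter_differentiable (hH p.2) p.1)]
  simp only [Finset.sum_apply, Pi.smul_apply, smul_eq_mul, Matrix.mulVec,
    dotProduct, Finset.mul_sum]
  rw [Finset.sum_product]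
  refine Finset.sum_congr rfl fun k _ => Finset.sum_congr rfl fun j _ => ?_
  rw [← Function.iterate_add_apply nabla M k]
  ring

lemma TopF_comp (n : ℕ) (hn : 1 ≤ n) (a b : ℂ) (H : ℂ → (Fin n × Fin n → ℂ))
    (hH : ∀ i, Differentiable ℂ (fun z => H z i)) :
    TopF n a (TopF n b H) = TopF n (a + b) H := by
  funext z
  have h1 : ∀ m : ℕ, (fun i => nabla^[m] (fun w => TopF n b H w i) z)
      = ∑ k ∈ Finset.range (2 * n), (b ^ k * ((k.factorial : ℂ))⁻¹) •
          (Nmat n ^ k).mulVec (fun j => nabla^[m + k] (fun w => H w j) z) :=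
    fun m => funext fun i => nabla_iter_TopF n b H hH m i z
  show ∑ m ∈ Finset.range (2 * n), (a ^ m * ((m.factorial : ℂ))⁻¹) •
      (Nmat n ^ m).mulVec (fun i => nabla^[m] (fun w => TopF n b H w i) z) = _
  have h2 : ∀ m ∈ Finset.range (2 * n),
      (a ^ m * ((m.factorial : ℂ))⁻¹) •
        (Nmat n ^ m).mulVec (fun i => nabla^[m] (fun w => TopF n b H w i) z)
      = ∑ k ∈ Finset.range (2 * n),
          ((a ^ m * ((m.factorial : ℂ))⁻¹) * (b ^ k * ((k.factorial : ℂ))⁻¹)) •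
            (Nmat n ^ (m + k)).mulVec (fun j => nabla^[m + k] (fun w => H w j) z) := by
    intro m _
    rw [h1 m, mulVec_sum', Finset.smul_sum]
    refine Finset.sum_congr rfl fun k _ => ?_
    rw [Matrix.mulVec_smul, Matrix.mulVec_mulVec, ← pow_add, smul_smul]
  rw [Finset.sum_congr rfl h2,
    sum_square_eq_diag (2 * n)
      (fun m k => ((a ^ m * ((m.factorial : ℂ))⁻¹) * (b ^ k * ((k.factorial : ℂ))⁻¹)) •
        (Nmat n ^ (m + k)).mulVec (fun j => nabla^[m + k] (fun w => H w j) z))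
      (fun p q hpq => by
        simp only [Nmat_pow_eq_zero hn (show 2 * n - 1 ≤ p + q by omega),
          Matrix.zero_mulVec, smul_zero])]
  refine Finset.sum_congr rfl fun s hs => ?_
  have hsub : ∀ q ∈ Finset.range (s + 1),
      ((a ^ (s - q) * (((s - q).factorial : ℂ))⁻¹) * (b ^ q * ((q.factorial : ℂ))⁻¹)) •
        (Nmat n ^ (s - q + q)).mulVec (fun j => nabla^[s - q + q] (fun w => H w j) z)
      = ((a ^ (s - q) * (((s - q).factorial : ℂ))⁻¹) * (b ^ q * ((q.factorial : ℂ))⁻¹)) •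
        (Nmat n ^ s).mulVec (fun j => nabla^[s] (fun w => H w j) z) := by
    intro q hq
    rw [Finset.mem_range] at hq
    rw [show s - q + q = s by omega]
  rw [Finset.sum_congr rfl hsub, ← Finset.sum_smul, conv_coeff]

lemma TopF_zero (n : ℕ) (hn : 1 ≤ n) (H : ℂ → (Fin n × Fin n → ℂ)) : TopF n 0 H = H := by
  funext z
  unfold TopF
  rw [Finset.sum_eq_single_of_mem 0 (Finset.mem_range.2 (by omega))]
  · simp [Matrix.one_mulVec]
  · intro m _ hm
    rw [zero_pow hm, zero_mul, zero_smul]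

lemma TopF_zero_fun (n : ℕ) (c : ℂ) : TopF n c (fun _ _ => 0) = fun _ _ => 0 := by
  funext z i
  unfold TopF
  simp [nabla_iter_zero_fun, Matrix.mulVec, dotProduct]

lemma TopF_add (n : ℕ) (c : ℂ) (H₁ H₂ : ℂ → (Fin n × Fin n → ℂ))
    (h₁ : ∀ i, Differentiable ℂ (fun z => H₁ z i))
    (h₂ : ∀ i, Differentiable ℂ (fun z => H₂ z i)) :
    TopF n c (fun z i => H₁ z i + H₂ z i) = fun z => TopF n c H₁ z + TopF n c H₂ z := by
  funext z
  unfold TopF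
  rw [← Finset.sum_add_distrib]
  refine Finset.sum_congr rfl fun m _ => ?_
  have ha : (fun i => nabla^[m] (fun w => H₁ w i + H₂ w i) z)
      = (fun i => nabla^[m] (fun w => H₁ w i) z) + (fun i => nabla^[m] (fun w => H₂ w i) z) :=
    funext fun i => congrFun (nabla_iter_add m (h₁ i) (h₂ i)) z
  rw [ha, Matrix.mulVec_add, smul_add]

lemma TopF_smul (n : ℕ) (c a : ℂ) (H : ℂ → (Fin n × Fin n → ℂ)) :
    TopF n c (fun z i => a * H z i) = fun z => a • TopF n c H z := by
  funext z
  unfold TopF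
  rw [Finset.smul_sum]
  refine Finset.sum_congr rfl fun m _ => ?_
  have h1 : (fun i => nabla^[m] (fun w => a * H w i) z)
      = a • (fun i => nabla^[m] (fun w => H w i) z) :=
    funext fun i => congrFun (nabla_iter_const_mul m a fun w => H w i) z
  rw [h1, Matrix.mulVec_smul, smul_comm]

lemma TopF_period (n : ℕ) (c : ℂ) (H : ℂ → (Fin n × Fin n → ℂ))
    (hp : ∀ i z, H (z + 1) i = H z i) (z : ℂ) : TopF n c H (z + 1) = TopF n c H z := by
  unfold TopF
  refine Finset.sum_congr rfl fun m _ => ?_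
  have hv : (fun i => nabla^[m] (fun w => H w i) (z + 1))
      = (fun i => nabla^[m] (fun w => H w i) z) :=
    funext fun i => nabla_iter_periodic (f := fun w => H w i) (hp i) m z
  rw [hv]

lemma TopF_tau {v τ : ℂ} (n : ℕ) (hn : 1 ≤ n) (c : ℂ)
    (A : Matrix (Fin n × Fin n) (Fin n × Fin n) ℂ)
    (hA : Nmat n * A = A * Nmat n)
    (H : ℂ → (Fin n × Fin n → ℂ))
    (hH : ∀ i, Differentiable ℂ (fun z => H z i))
    (htau : ∀ x, H (x + τ) = eFun v τ x • A.mulVec (H x)) (z : ℂ) :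
    TopF n c H (z + τ) = eFun v τ z • ((Emat n c * A).mulVec (TopF n c H z)) := by
  classical
  set w : ℕ → (Fin n × Fin n → ℂ) := fun k => fun j => nabla^[k] (fun x => H x j) z with hw
  have hcomm : Commute (Nmat n) A := hA
  have hAk : ∀ k : ℕ, A * Nmat n ^ k = Nmat n ^ k * A := fun k => (hcomm.symm.pow_right k).eq
  have hg : ∀ i : Fin n × Fin n, Differentiable ℂ (fun x => (A.mulVec (H x)) i) := by
    intro i
    have h0 : (fun x => (A.mulVec (H x)) i) = fun x => ∑ j, A i j * H x j := rfl
    rw [h0]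
    exact Differentiable.fun_sum fun j _ => (hH j).const_mul _
  have key : ∀ (m : ℕ) (i : Fin n × Fin n), nabla^[m] (fun x => H x i) (z + τ)
      = eFun v τ z * ∑ k ∈ Finset.range (m + 1), (m.choose k : ℂ) * (A.mulVec (w k)) i := by
    intro m i
    rw [nabla_iter_comp_add (fun x => H x i) τ m z]
    have he : (fun x => H (x + τ) i) = fun x => eFun v τ x * (A.mulVec (H x)) i := by
      funext x; rw [htau x]; rfl
    rw [he, nabla_iter_eFun_mul (hg i) m z]
    congr 1
    refine Finset.sum_congr rfl fun k _ => ?_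
    congr 1
    have h5 : (fun x => (A.mulVec (H x)) i) = fun x => ∑ j, A i j * H x j := rfl
    rw [h5, nabla_iter_sum k Finset.univ (fun j => A i j) (fun j x => H x j)
      (fun j _ => hH j)]
    rfl
  have lhs_eq : TopF n c H (z + τ)
      = eFun v τ z • ∑ m ∈ Finset.range (2 * n), ∑ k ∈ Finset.range (m + 1),
          ((c ^ m * ((m.factorial : ℂ))⁻¹) * (m.choose k : ℂ)) •
            ((Nmat n ^ m * A).mulVec (w k)) := by
    unfold TopF
    rw [Finset.smul_sum]
    refine Finset.sum_congr rfl fun m _ => ?_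
    have h6 : (fun i => nabla^[m] (fun x => H x i) (z + τ))
        = eFun v τ z • ∑ k ∈ Finset.range (m + 1), (m.choose k : ℂ) • (A.mulVec (w k)) := by
      funext i
      rw [key m i]
      simp [Finset.sum_apply, Pi.smul_apply, smul_eq_mul]
    rw [h6, Matrix.mulVec_smul, mulVec_sum', smul_comm]
    congr 1
    rw [Finset.smul_sum]
    refine Finset.sum_congr rfl fun k _ => ?_
    rw [Matrix.mulVec_smul, Matrix.mulVec_mulVec, smul_smul]
  have rhs_eq : (Emat n c * A).mulVec (TopF n c H z)
      = ∑ q ∈ Finset.range (2 * n), ∑ l ∈ Finset.range (2 * n),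
          ((c ^ l * ((l.factorial : ℂ))⁻¹) * (c ^ q * ((q.factorial : ℂ))⁻¹)) •
            ((Nmat n ^ (l + q) * A).mulVec (w q)) := by
    show (Emat n c * A).mulVec (∑ q ∈ Finset.range (2 * n),
      (c ^ q * ((q.factorial : ℂ))⁻¹) • (Nmat n ^ q).mulVec (w q)) = _
    rw [mulVec_sum']
    refine Finset.sum_congr rfl fun q _ => ?_
    rw [Matrix.mulVec_smul, Matrix.mulVec_mulVec]
    have h7 : Emat n c * A * Nmat n ^ q
        = ∑ l ∈ Finset.range (2 * n), (c ^ l * ((l.factorial : ℂ))⁻¹) •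
            (Nmat n ^ (l + q) * A) := by
      unfold Emat
      rw [Finset.sum_mul, Finset.sum_mul]
      refine Finset.sum_congr rfl fun l _ => ?_
      rw [smul_mul_assoc, smul_mul_assoc]
      congr 1
      rw [mul_assoc, hAk q, ← mul_assoc, ← pow_add]
    rw [h7, sum_mulVec', Finset.smul_sum]
    refine Finset.sum_congr rfl fun l _ => ?_
    rw [Matrix.smul_mulVec, smul_smul, mul_comm (c ^ q * ((q.factorial : ℂ))⁻¹)]
  have rhs_eq2 : (Emat n c * A).mulVec (TopF n c H z)
      = ∑ s ∈ Finset.range (2 * n), ∑ q ∈ Finset.range (s + 1),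
          ((c ^ (s - q) * (((s - q).factorial : ℂ))⁻¹) * (c ^ q * ((q.factorial : ℂ))⁻¹)) •
            ((Nmat n ^ (s - q + q) * A).mulVec (w q)) := by
    rw [rhs_eq, Finset.sum_comm]
    exact sum_square_eq_diag (2 * n)
      (fun l q => ((c ^ l * ((l.factorial : ℂ))⁻¹) * (c ^ q * ((q.factorial : ℂ))⁻¹)) •
        ((Nmat n ^ (l + q) * A).mulVec (w q)))
      (fun p q hpq => by
        simp only [Nmat_pow_eq_zero hn (show 2 * n - 1 ≤ p + q by omega), zero_mul,
          Matrix.zero_mulVec, smul_zero])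
  rw [lhs_eq, rhs_eq2]
  congr 1
  refine Finset.sum_congr rfl fun s hs => Finset.sum_congr rfl fun q hq => ?_
  rw [Finset.mem_range] at hq
  have hqs : q ≤ s := by omega
  rw [show s - q + q = s by omega]
  congr 1
  have hfc := fact_coeff hqs
  have hc : c ^ (s - q) * c ^ q = c ^ s := by
    rw [← pow_add]
    congr 1
    omega
  calc (c ^ s * ((s.factorial : ℂ))⁻¹) * (s.choose q : ℂ)
      = c ^ s * ((s.choose q : ℂ) * ((s.factorial : ℂ))⁻¹) := by ring
    _ = c ^ s * ((((s - q).factorial : ℂ))⁻¹ * ((q.factorial : ℂ))⁻¹) := by rw [← hfc]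
    _ = (c ^ (s - q) * c ^ q) * ((((s - q).factorial : ℂ))⁻¹ * ((q.factorial : ℂ))⁻¹) := by
        rw [hc]
    _ = (c ^ (s - q) * (((s - q).factorial : ℂ))⁻¹) * (c ^ q * ((q.factorial : ℂ))⁻¹) := by ring

lemma mem_Vsp_iff {τ : ℂ} {φ : ℂ → ℂ} {f : ℂ → ℂ} :
    f ∈ Vsp τ φ ↔ Differentiable ℂ f ∧ (∀ z, f (z + 1) = f z) ∧ ∀ z, f (z + τ) = φ z * f z :=
  Iff.rfl

lemma mem_Wsp_iff {n : ℕ} {τ : ℂ} {e : ℂ → ℂ} {F : ℂ → (Fin n × Fin n → ℂ)} :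
    F ∈ Wsp n τ e ↔ (∀ i, Differentiable ℂ fun z => F z i) ∧ (∀ z, F (z + 1) = F z) ∧
      ∀ z, F (z + τ) = e z • (NormedSpace.exp (Nmat n)).mulVec (F z) :=
  Iff.rfl

lemma TopF_mem_W {v τ : ℂ} (n : ℕ) (hn : 1 ≤ n) (H : ℂ → (Fin n × Fin n → ℂ))
    (hH : ∀ i, (fun z => H z i) ∈ Vsp τ (eFun v τ)) :
    TopF n 1 H ∈ Wsp n τ (eFun v τ) := by
  have hmem := fun i => mem_Vsp_iff.1 (hH i)
  refine mem_Wsp_iff.2 ⟨fun i => TopF_diff n 1 H (fun j => (hmem j).1) i,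
    fun z => TopF_period n 1 H (fun i z => (hmem i).2.1 z) z, fun z => ?_⟩
  have htau : ∀ x, H (x + τ) = eFun v τ x • (1 : Matrix (Fin n × Fin n) (Fin n × Fin n) ℂ).mulVec (H x) := by
    intro x
    funext i
    rw [Matrix.one_mulVec]
    exact (hmem i).2.2 x
  have h2 := TopF_tau n hn 1 1 (by rw [mul_one, one_mul]) H (fun i => (hmem i).1) htau z
  rw [mul_one] at h2
  rw [exp_Nmat hn]
  exact h2

lemma TopF_mem_V {v τ : ℂ} (n : ℕ) (hn : 1 ≤ n) (F : ℂ → (Fin n × Fin n → ℂ))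
    (hF : F ∈ Wsp n τ (eFun v τ)) (i : Fin n × Fin n) :
    (fun z => TopF n (-1) F z i) ∈ Vsp τ (eFun v τ) := by
  obtain ⟨hd, hp, hq⟩ := mem_Wsp_iff.1 hF
  refine mem_Vsp_iff.2 ⟨TopF_diff n (-1) F hd i, fun z => ?_, fun z => ?_⟩
  · exact congrFun (TopF_period n (-1) F (fun i z => congrFun (hp z) i) z) i
  · have htau : ∀ x, F (x + τ) = eFun v τ x • (Emat n 1).mulVec (F x) := by
      intro x
      rw [hq x, exp_Nmat hn]
    have h2 := TopF_tau n hn (-1) (Emat n 1) (Nmat_comm_Emat 1).symm F hd htau z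
    rw [Emat_mul hn (-1) 1, show ((-1 : ℂ) + 1) = 0 by norm_num, Emat_zero hn,
      Matrix.one_mulVec] at h2
    exact congrFun h2 i

lemma deltaFun_eq_TopF (n : ℕ) (f : ℂ → ℂ) (u : Fin n × Fin n → ℂ) :
    deltaFun n f u = TopF n 1 (fun z i => u i * f z) := by
  funext z
  unfold deltaFun TopF
  refine Finset.sum_congr rfl fun m _ => ?_
  have h1 : (fun i => nabla^[m] (fun w => u i * f w) z) = (nabla^[m] f z) • u := by
    funext i
    rw [congrFun (nabla_iter_const_mul m (u i) f) z]
    simp [mul_comm]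
  rw [h1, Matrix.mulVec_smul, one_pow, one_mul, smul_smul]

noncomputable def PhiMap (v τ : ℂ) (n : ℕ) (hn : 1 ≤ n) :
    ((Fin n × Fin n) → ↥(Vsp τ (eFun v τ))) →ₗ[ℂ] ↥(Wsp n τ (eFun v τ)) where
  toFun G := ⟨TopF n 1 (fun z i => (G i : ℂ → ℂ) z),
    TopF_mem_W n hn _ (fun i => (G i).2)⟩
  map_add' := by
    intro G₁ G₂
    apply Subtype.ext
    show TopF n 1 (fun z i => (((G₁ + G₂) i : ℂ → ℂ)) z) = _
    have h0 : (fun z i => ((G₁ + G₂) i : ℂ → ℂ) z)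
        = fun z i => (G₁ i : ℂ → ℂ) z + (G₂ i : ℂ → ℂ) z := rfl
    rw [h0, TopF_add n 1 _ _ (fun i => (mem_Vsp_iff.1 (G₁ i).2).1)
      (fun i => (mem_Vsp_iff.1 (G₂ i).2).1)]
    rfl
  map_smul' := by
    intro a G
    apply Subtype.ext
    show TopF n 1 (fun z i => (((a • G) i : ℂ → ℂ)) z) = _
    have h0 : (fun z i => ((a • G) i : ℂ → ℂ) z)
        = fun z i => a * (G i : ℂ → ℂ) z := rfl
    rw [h0, TopF_smul n 1 a (fun z i => (G i : ℂ → ℂ) z)]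
    rfl

lemma PhiMap_bijective (v τ : ℂ) (n : ℕ) (hn : 1 ≤ n) :
    Function.Bijective (PhiMap v τ n hn) := by
  constructor
  · intro G₁ G₂ hG
    have h0 : TopF n 1 (fun z i => (G₁ i : ℂ → ℂ) z)
        = TopF n 1 (fun z i => (G₂ i : ℂ → ℂ) z) := congrArg Subtype.val hG
    have h1 : ∀ G : (Fin n × Fin n) → ↥(Vsp τ (eFun v τ)),
        TopF n (-1) (TopF n 1 (fun z i => (G i : ℂ → ℂ) z))
          = fun z i => (G i : ℂ → ℂ) z := by
      intro G
      rw [TopF_comp n hn (-1) 1 _ (fun i => (mem_Vsp_iff.1 (G i).2).1),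
        show ((-1 : ℂ) + 1) = 0 by norm_num, TopF_zero n hn]
    funext i
    apply Subtype.ext
    funext z
    have h2 : (fun z i => (G₁ i : ℂ → ℂ) z) = fun z i => (G₂ i : ℂ → ℂ) z := by
      rw [← h1 G₁, h0, h1 G₂]
    exact congrFun (congrFun h2 z) i
  · intro F
    refine ⟨fun i => ⟨fun z => TopF n (-1) (F : ℂ → (Fin n × Fin n → ℂ)) z i,
      TopF_mem_V n hn _ F.2 i⟩, ?_⟩
    apply Subtype.ext
    show TopF n 1 (fun z i => TopF n (-1) (F : ℂ → (Fin n × Fin n → ℂ)) z i)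
      = (F : ℂ → (Fin n × Fin n → ℂ))
    have h0 : (fun z i => TopF n (-1) (F : ℂ → (Fin n × Fin n → ℂ)) z i)
        = TopF n (-1) (F : ℂ → (Fin n × Fin n → ℂ)) := rfl
    rw [h0, TopF_comp n hn 1 (-1) _ (mem_Wsp_iff.1 F.2).1,
      show ((1 : ℂ) + (-1)) = 0 by norm_num, TopF_zero n hn]

lemma final_equiv (v τ : ℂ) (n : ℕ) (hn : 1 ≤ n) :
    ∃ δ : ((↥(Vsp τ (eFun v τ))) ⊗[ℂ] (Fin n × Fin n → ℂ)) ≃ₗ[ℂ]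
        ↥(Wsp n τ (eFun v τ)),
      ∀ (f : ↥(Vsp τ (eFun v τ))) (u : Fin n × Fin n → ℂ),
        (δ (f ⊗ₜ[ℂ] u) : ℂ → (Fin n × Fin n → ℂ)) = deltaFun n (f : ℂ → ℂ) u := by
  classical
  refine ⟨(TensorProduct.piScalarRight ℂ ℂ (↥(Vsp τ (eFun v τ))) (Fin n × Fin n)).trans
    (LinearEquiv.ofBijective (PhiMap v τ n hn) (PhiMap_bijective v τ n hn)), ?_⟩
  intro f u
  rw [LinearEquiv.trans_apply]
  have hps : (TensorProduct.piScalarRight ℂ ℂ (↥(Vsp τ (eFun v τ))) (Fin n × Fin n))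
      (f ⊗ₜ[ℂ] u) = fun i => u i • f := by
    simp [TensorProduct.piScalarRight, TensorProduct.piScalarRightHom_tmul]
  rw [hps, LinearEquiv.ofBijective_apply]
  show TopF n 1 (fun z i => ((u i • f : ↥(Vsp τ (eFun v τ))) : ℂ → ℂ) z)
    = deltaFun n (f : ℂ → ℂ) u
  have h0 : (fun z i => ((u i • f : ↥(Vsp τ (eFun v τ))) : ℂ → ℂ) z)
      = fun z i => u i * (f : ℂ → ℂ) z := rfl
  rw [h0]
  exact (deltaFun_eq_TopF n (f : ℂ → ℂ) u).symm

/-- δ : V ⊗ ℂ^{n²} → W, δ(f⊗u) = Σ_m (∇^m f/m!)·N^m u, is a well-defined ℂ-linear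
isomorphism (the sum is finite since N is nilpotent). -/
theorem delta_equiv (n : ℕ) (hn : 1 ≤ n) (τ : ℂ) (hτ : 0 < τ.im) (v : ℂ) :
    (∀ f ∈ Vsp τ (fun z => -Complex.exp (-(2 * πc * I) * (z + v + τ))), ∀ u,
      deltaFun n f u ∈ Wsp n τ (fun z => -Complex.exp (-(2 * πc * I) * (z + v + τ)))) ∧
    ∃ δ : (↥(Vsp τ (fun z => -Complex.exp (-(2 * πc * I) * (z + v + τ)))) ⊗[ℂ]
            (Fin n × Fin n → ℂ)) ≃ₗ[ℂ]
          ↥(Wsp n τ (fun z => -Complex.exp (-(2 * πc * I) * (z + v + τ)))),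
      ∀ (f : ↥(Vsp τ (fun z => -Complex.exp (-(2 * πc * I) * (z + v + τ)))))
        (u : Fin n × Fin n → ℂ),
        (δ (f ⊗ₜ[ℂ] u) : ℂ → (Fin n × Fin n → ℂ)) = deltaFun n (f : ℂ → ℂ) u := by
  constructor
  · intro f hf u
    rw [deltaFun_eq_TopF n f u]
    exact TopF_mem_W (v := v) n hn _ (fun i => (Vsp τ (eFun v τ)).smul_mem (u i) hf)
  · exact final_equiv v τ n hn
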